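/- Let C > 0, c > 0, γ ∈ (0,1), d > 0 be reals, let D and w be positive integers, let M > 0 and n > 0 be reals, and let H be a natural number. If n ≤ C·c^{−d}·(M/w)·((γ^{−w}−1)/(γ^{−1}−1))·∑_{k=0}^{H} γ^{−kwd/D}, then c·γ^{(wH−w)/D} ≤ ( (n/C)·(w/M)·((γ^{−w}−1)/(γ^{−1}−1))^{−1}·(γ^{wd/D} − γ^{2wd/D}) )^{−1/d}. -/

import Mathlib

open Finset in
/-- Core algebraic step of Corollary 2: if
`n ≤ C·c^{−d}·(M/w)·((γ^{−w}−1)/(γ^{−1}−1))·∑_{k=0}^{H} γ^{−kwd/D}`, then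
`c·γ^{(wH−w)/D} ≤ ((n/C)·(w/M)·((γ^{−w}−1)/(γ^{−1}−1))^{−1}·(γ^{wd/D}−γ^{2wd/D}))^{−1/d}`. -/
theorem stmt_10 (C c γ d : ℝ) (hC : 0 < C) (hc : 0 < c) (hγ0 : 0 < γ) (hγ1 : γ < 1)
    (hd : 0 < d) (D w : ℕ) (hD : 0 < D) (hw : 0 < w) (M n : ℝ) (hM : 0 < M) (hn : 0 < n)
    (H : ℕ)
    (hmain : n ≤ C * c ^ (-d) * (M / (w : ℝ)) * ((γ ^ (-(w : ℝ)) - 1) / (γ ^ (-1 : ℝ) - 1)) *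
      ∑ k ∈ Finset.range (H + 1), γ ^ (-((k : ℝ) * (w : ℝ) * d / (D : ℝ)))) :
    c * γ ^ (((w : ℝ) * (H : ℝ) - (w : ℝ)) / (D : ℝ)) ≤
      ((n / C) * ((w : ℝ) / M) * ((γ ^ (-(w : ℝ)) - 1) / (γ ^ (-1 : ℝ) - 1))⁻¹ *
        (γ ^ ((w : ℝ) * d / (D : ℝ)) - γ ^ (2 * (w : ℝ) * d / (D : ℝ)))) ^ (-1 / d) := by
  have hDpos : (0:ℝ) < (D:ℝ) := by exact_mod_cast hD
  have hwpos : (0:ℝ) < (w:ℝ) := by exact_mod_cast hw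
  set r : ℝ := γ ^ ((w : ℝ) * d / (D : ℝ)) with hr_def
  have hr0 : 0 < r := Real.rpow_pos_of_pos hγ0 _
  have hr1 : r < 1 := Real.rpow_lt_one hγ0.le hγ1 (by positivity)
  have h1r : 0 < 1 - r := by linarith
  set A : ℝ := (γ ^ (-(w : ℝ)) - 1) / (γ ^ (-1 : ℝ) - 1) with hA_def
  have hA1 : 1 < γ ^ (-(w : ℝ)) :=
    (Real.one_lt_rpow_iff_of_pos hγ0).mpr (Or.inr ⟨hγ1, by simpa using hwpos⟩)
  have hA2 : 1 < γ ^ (-1 : ℝ) :=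
    (Real.one_lt_rpow_iff_of_pos hγ0).mpr (Or.inr ⟨hγ1, by norm_num⟩)
  have hA : 0 < A := div_pos (by linarith) (by linarith)
  set e : ℝ := c ^ (-d) with he_def
  have he : 0 < e := Real.rpow_pos_of_pos hc _
  -- rewrite each summand as a power of r⁻¹
  have hterm : ∀ k : ℕ, γ ^ (-((k : ℝ) * (w : ℝ) * d / (D : ℝ))) = (r⁻¹) ^ k := by
    intro k
    rw [inv_pow, hr_def, ← Real.rpow_natCast (γ ^ ((w : ℝ) * d / (D : ℝ))) k,
      ← Real.rpow_mul hγ0.le, ← Real.rpow_neg hγ0.le]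
    congr 1
    ring
  -- bound the geometric sum
  have hgeom : ∑ j ∈ Finset.range (H + 1), r ^ j ≤ (1 - r)⁻¹ := by
    rw [geom_sum_eq (by linarith : r ≠ 1)]
    rw [div_le_iff_of_neg (by linarith : r - 1 < 0)]
    have hrp : 0 < r ^ (H + 1) := pow_pos hr0 _
    have : (1 - r)⁻¹ * (1 - r) = 1 := inv_mul_cancel₀ (ne_of_gt h1r)
    nlinarith
  have hsum : ∑ k ∈ Finset.range (H + 1), (r⁻¹) ^ k ≤ (r⁻¹) ^ H * (1 - r)⁻¹ := by
    have hrefl : ∑ k ∈ Finset.range (H + 1), (r⁻¹) ^ (H - k)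
        = ∑ k ∈ Finset.range (H + 1), (r⁻¹) ^ k := by
      have := Finset.sum_range_reflect (fun k => (r⁻¹) ^ k) (H + 1)
      simpa using this
    rw [← hrefl]
    have heq : ∀ k ∈ Finset.range (H + 1), (r⁻¹) ^ (H - k) = (r⁻¹) ^ H * r ^ k := by
      intro k hk
      rw [Finset.mem_range] at hk
      have hk' : k ≤ H := Nat.lt_succ_iff.mp hk
      rw [pow_sub₀ _ (inv_ne_zero (ne_of_gt hr0)) hk']
      simp [inv_pow, div_eq_mul_inv]
    rw [Finset.sum_congr rfl heq, ← Finset.mul_sum]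
    exact mul_le_mul_of_nonneg_left hgeom (by positivity)
  -- the main bound in terms of r
  have hn' : n ≤ C * e * (M / (w : ℝ)) * A * ((r⁻¹) ^ H * (1 - r)⁻¹) := by
    calc n ≤ C * e * (M / (w : ℝ)) * A * ∑ k ∈ Finset.range (H + 1), (r⁻¹) ^ k := by
            simpa only [hterm] using hmain
      _ ≤ C * e * (M / (w : ℝ)) * A * ((r⁻¹) ^ H * (1 - r)⁻¹) := by
            apply mul_le_mul_of_nonneg_left hsum
            positivity
  -- rewrite second rpow difference
  have h2 : γ ^ (2 * (w : ℝ) * d / (D : ℝ)) = r * r := by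
    rw [hr_def, ← Real.rpow_add hγ0]
    congr 1
    ring
  set X : ℝ := (n / C) * ((w : ℝ) / M) * A⁻¹ *
      (γ ^ ((w : ℝ) * d / (D : ℝ)) - γ ^ (2 * (w : ℝ) * d / (D : ℝ))) with hX_def
  have hXeq : X = (n / C) * ((w : ℝ) / M) * A⁻¹ * (r * (1 - r)) := by
    rw [hX_def, h2]; ring
  have hX : 0 < X := by
    rw [hXeq]; positivity
  -- key inequality : X ≤ e * ((r⁻¹)^H * r)
  have key : X ≤ e * ((r⁻¹) ^ H * r) := by
    have hK : (0:ℝ) < (w : ℝ) * A⁻¹ * (r * (1 - r)) / (C * M) := by positivity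
    have := mul_le_mul_of_nonneg_right hn' hK.le
    calc X = n * ((w : ℝ) * A⁻¹ * (r * (1 - r)) / (C * M)) := by
            rw [hXeq]; field_simp
      _ ≤ (C * e * (M / (w : ℝ)) * A * ((r⁻¹) ^ H * (1 - r)⁻¹)) *
            ((w : ℝ) * A⁻¹ * (r * (1 - r)) / (C * M)) := this
      _ = e * ((r⁻¹) ^ H * r) := by
            field_simp
  -- identify e * ((r⁻¹)^H * r) with (c*t)^(-d)
  set t : ℝ := γ ^ (((w : ℝ) * (H : ℝ) - (w : ℝ)) / (D : ℝ)) with ht_def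
  have ht0 : 0 < t := Real.rpow_pos_of_pos hγ0 _
  have hct : e * ((r⁻¹) ^ H * r) = (c * t) ^ (-d) := by
    rw [Real.mul_rpow hc.le ht0.le, ht_def, ← Real.rpow_mul hγ0.le, he_def]
    congr 1
    rw [hr_def, inv_pow, ← Real.rpow_natCast (γ ^ ((w : ℝ) * d / (D : ℝ))) H,
      ← Real.rpow_mul hγ0.le, ← Real.rpow_neg hγ0.le, ← Real.rpow_add hγ0]
    congr 1
    field_simp
    ring
  rw [hct] at key
  have hfin := Real.rpow_le_rpow_of_nonpos hX key
    (by rw [neg_div]; exact neg_nonpos.mpr (by positivity) : -1 / d ≤ 0)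
  have hpow : ((c * t) ^ (-d)) ^ (-1 / d) = c * t := by
    rw [← Real.rpow_mul (by positivity : (0:ℝ) ≤ c * t),
      show -d * (-1 / d) = 1 by field_simp, Real.rpow_one]
  calc c * t = ((c * t) ^ (-d)) ^ (-1 / d) := hpow.symm
    _ ≤ X ^ (-1 / d) := hfin
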